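/- Let r ≥ 1 and let M be a linear subspace of the space of skew-symmetric (2r+2)×(2r+2) complex matrices such that every nonzero matrix in M has rank 2r. If A and B are nonzero matrices in M with ker A = ker B (as subspaces of ℂ^{2r+2}), then B is a scalar multiple of A. (Equivalently, the map sending the line spanned by a nonzero A ∈ M to its 2-dimensional kernel is injective.) -/

import Mathlib

open Matrix Module

private noncomputable def dotD (n : ℕ) : (Fin n → ℂ) ≃ₗ[ℂ] Module.Dual ℂ (Fin n → ℂ) :=
  (Pi.basisFun ℂ (Fin n)).toDualEquiv

private lemma dotD_apply {n : ℕ} (y x : Fin n → ℂ) : dotD n y x = y ⬝ᵥ x := by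
  simp [dotD, Basis.toDualEquiv, Basis.toDual, dotProduct]

/-- The "orthogonal complement" of `K` w.r.t. the (bilinear) dot product. -/
private noncomputable def perpK {n : ℕ} (K : Submodule ℂ (Fin n → ℂ)) :
    Submodule ℂ (Fin n → ℂ) :=
  K.dualAnnihilator.comap (dotD n).toLinearMap

private lemma mem_perpK {n : ℕ} {K : Submodule ℂ (Fin n → ℂ)} {y : Fin n → ℂ} :
    y ∈ perpK K ↔ ∀ x ∈ K, y ⬝ᵥ x = 0 := by
  simp [perpK, Submodule.mem_dualAnnihilator, dotD_apply]

private lemma finrank_perpK {n : ℕ} (K : Submodule ℂ (Fin n → ℂ)) :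
    finrank ℂ (perpK K) + finrank ℂ K = n := by
  have h1 : finrank ℂ (perpK K) = finrank ℂ K.dualAnnihilator := by
    rw [perpK, Submodule.comap_equiv_eq_map_symm]
    exact LinearEquiv.finrank_map_eq _ _
  have h2 : finrank ℂ K.dualAnnihilator = finrank ℂ ((Fin n → ℂ) ⧸ K) :=
    (LinearEquiv.finrank_eq (Subspace.quotEquivAnnihilator K)).symm
  rw [h1, h2, Submodule.finrank_quotient_add_finrank, Module.finrank_fin_fun]

private lemma skew_range {n : ℕ} (A : Matrix (Fin n) (Fin n) ℂ) (hs : Aᵀ = -A) :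
    LinearMap.range A.mulVecLin = perpK (LinearMap.ker A.mulVecLin) := by
  have hle : LinearMap.range A.mulVecLin ≤ perpK (LinearMap.ker A.mulVecLin) := by
    rintro y ⟨v, rfl⟩
    rw [mem_perpK]
    intro x hx
    have hx0 : A *ᵥ x = 0 := hx
    have h1 : (A.mulVecLin v) ⬝ᵥ x = x ⬝ᵥ (A *ᵥ v) := by
      simp [Matrix.mulVecLin_apply, dotProduct_comm]
    rw [h1, Matrix.dotProduct_mulVec, ← Matrix.mulVec_transpose, hs,
      Matrix.neg_mulVec, hx0]
    simp
  apply Submodule.eq_of_le_of_finrank_eq hle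
  have h1 := LinearMap.finrank_range_add_finrank_ker A.mulVecLin
  rw [Module.finrank_fin_fun] at h1
  have h2 := finrank_perpK (LinearMap.ker A.mulVecLin)
  omega

theorem stmt_9 (r : ℕ) (hr : 1 ≤ r)
    (M : Submodule ℂ (Matrix (Fin (2*r+2)) (Fin (2*r+2)) ℂ))
    (hskew : ∀ A ∈ M, Aᵀ = -A)
    (hrank : ∀ A ∈ M, A ≠ 0 → A.rank = 2*r)
    (A B : Matrix (Fin (2*r+2)) (Fin (2*r+2)) ℂ)
    (hA : A ∈ M) (hB : B ∈ M) (hA0 : A ≠ 0) (hB0 : B ≠ 0)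
    (hker : LinearMap.ker (Matrix.mulVecLin A) = LinearMap.ker (Matrix.mulVecLin B)) :
    ∃ c : ℂ, B = c • A := by
  have hrkA : A.rank = 2*r := hrank A hA hA0
  have hfinV : finrank ℂ (Fin (2*r+2) → ℂ) = 2*r+2 := Module.finrank_fin_fun (R := ℂ)
  have hrnA := LinearMap.finrank_range_add_finrank_ker A.mulVecLin
  rw [hfinV] at hrnA
  have hrangeA : finrank ℂ (LinearMap.range A.mulVecLin) = 2*r := hrkA
  have hKrk : finrank ℂ (LinearMap.ker A.mulVecLin) = 2 := by omega
  -- equal ranges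
  have hWg : LinearMap.range B.mulVecLin = LinearMap.range A.mulVecLin := by
    rw [skew_range A (hskew A hA), skew_range B (hskew B hB), hker]
  -- eigenvalue setup
  have : Nontrivial (LinearMap.range A.mulVecLin) :=
    Module.nontrivial_of_finrank_pos (by omega : 0 < finrank ℂ (LinearMap.range A.mulVecLin))
  have hsurj : LinearMap.range A.mulVecLin.rangeRestrict = ⊤ :=
    LinearMap.range_rangeRestrict A.mulVecLin
  obtain ⟨s, hs⟩ := A.mulVecLin.rangeRestrict.exists_rightInverse_of_surjective hsurj
  set g' : (Fin (2*r+2) → ℂ) →ₗ[ℂ] LinearMap.range A.mulVecLin :=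
    B.mulVecLin.codRestrict (LinearMap.range A.mulVecLin)
      (fun v => hWg ▸ LinearMap.mem_range_self B.mulVecLin v) with hg'
  set φ : Module.End ℂ (LinearMap.range A.mulVecLin) := g' ∘ₗ s with hφ
  obtain ⟨t, ht⟩ := Module.End.exists_eigenvalue φ
  obtain ⟨w, hw⟩ := ht.exists_hasEigenvector
  have hfv : A.mulVecLin (s w) = (w : Fin (2*r+2) → ℂ) := by
    have h1 : A.mulVecLin.rangeRestrict (s w) = w := by
      have := LinearMap.congr_fun hs w
      exact this
    have := congrArg (Subtype.val) h1
    simpa using this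
  have hgv : B.mulVecLin (s w) = t • (w : Fin (2*r+2) → ℂ) := by
    have h1 : φ w = t • w := hw.apply_eq_smul
    have := congrArg (Subtype.val) h1
    simpa [hφ, hg', LinearMap.codRestrict] using this
  refine ⟨t, ?_⟩
  by_contra hBt
  have hC0 : B - t • A ≠ 0 := sub_ne_zero.mpr hBt
  have hCM : B - t • A ∈ M := M.sub_mem hB (M.smul_mem t hA)
  have hrkC : (B - t • A).rank = 2*r := hrank _ hCM hC0
  have hCmul : ∀ x, (B - t • A).mulVecLin x = B.mulVecLin x - t • A.mulVecLin x := by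
    intro x
    simp [Matrix.mulVecLin_apply, Matrix.sub_mulVec, Matrix.smul_mulVec]
  have hrnC := LinearMap.finrank_range_add_finrank_ker (B - t • A).mulVecLin
  rw [hfinV] at hrnC
  have hrangeC : finrank ℂ (LinearMap.range (B - t • A).mulVecLin) = 2*r := hrkC
  have hkerC : finrank ℂ (LinearMap.ker (B - t • A).mulVecLin) = 2 := by omega
  have hKle : LinearMap.ker A.mulVecLin ≤ LinearMap.ker (B - t • A).mulVecLin := by
    intro x hx
    have hfx : A.mulVecLin x = 0 := hx
    have hgx : B.mulVecLin x = 0 := by rw [hker] at hx; exact hx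
    rw [LinearMap.mem_ker, hCmul, hfx, hgx]
    simp
  have hvC : s w ∈ LinearMap.ker (B - t • A).mulVecLin := by
    rw [LinearMap.mem_ker, hCmul, hfv, hgv]
    simp
  have hvK : s w ∉ LinearMap.ker A.mulVecLin := by
    intro hvk
    have h0 : A.mulVecLin (s w) = 0 := hvk
    rw [hfv] at h0
    exact hw.right (Submodule.coe_eq_zero.mp h0)
  have hlt : LinearMap.ker A.mulVecLin < LinearMap.ker (B - t • A).mulVecLin :=
    lt_of_le_of_ne hKle (fun h => hvK (h ▸ hvC))
  have := Submodule.finrank_lt_finrank_of_lt hlt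
  omega
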